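/- Let R be a commutative local ring, let m ≥ 1, and let A(x) ∈ M_2(R[[x]]/(x^m)) be a 2×2 matrix over the quotient of the power series ring by the ideal generated by x^m, with A(0) ∈ M_2(R) the matrix of constant coefficients. Then A(x) is very clean in M_2(R[[x]]/(x^m)) if and only if A(0) is very clean in M_2(R). -/

import Mathlib

/-- An element `a` of a ring is *very clean* if there is an idempotent `e` commuting with `a`
such that `a - e` or `a + e` is a unit. -/
def IsVeryClean {R : Type*} [Ring R] (a : R) : Prop :=
  ∃ e : R, IsIdempotentElem e ∧ a * e = e * a ∧ (IsUnit (a - e) ∨ IsUnit (a + e))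

/-- A ring is *very clean* if every element is very clean. -/
def VeryCleanRing (R : Type*) [Ring R] : Prop :=
  ∀ a : R, IsVeryClean a

/-- An element `a` of a ring is *strongly clean* if there is an idempotent `e` commuting with `a`
such that `a - e` is a unit. -/
def IsStronglyClean {R : Type*} [Ring R] (a : R) : Prop :=
  ∃ e : R, IsIdempotentElem e ∧ a * e = e * a ∧ IsUnit (a - e)

/-- A ring is *strongly clean* if every element is strongly clean. -/
def StronglyCleanRing (R : Type*) [Ring R] : Prop :=
  ∀ a : R, IsStronglyClean a

/-- The ring homomorphism `R[[x]]/(x^m) → R` sending a (truncated) power series to its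
constant coefficient, for `m ≥ 1`. -/
noncomputable def constantCoeffQuot (R : Type*) [CommRing R] (m : ℕ) (hm : 1 ≤ m) :
    (PowerSeries R ⧸ Ideal.span {(PowerSeries.X : PowerSeries R) ^ m}) →+* R :=
  Ideal.Quotient.lift _ (PowerSeries.constantCoeff : PowerSeries R →+* R) (by
    intro a ha
    rw [Ideal.mem_span_singleton] at ha
    obtain ⟨b, rfl⟩ := ha
    simp [map_mul, map_pow, zero_pow (by omega : m ≠ 0)])


section Aux


lemma ch2 {T : Type*} [CommRing T] (A : Matrix (Fin 2) (Fin 2) T) :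
    A * A - A.trace • A + A.det • (1 : Matrix (Fin 2) (Fin 2) T) = 0 := by
  ext i j
  fin_cases i <;> fin_cases j <;>
    simp [Matrix.mul_apply, Fin.sum_univ_two, Matrix.trace_fin_two, Matrix.det_fin_two,
      Matrix.one_apply, Matrix.smul_apply, smul_eq_mul, Matrix.sub_apply, Matrix.add_apply] <;>
    ring

lemma idem_local {R : Type*} [CommRing R] [IsLocalRing R] {t : R} (h : t * t = t) :
    t = 0 ∨ t = 1 := by
  rcases IsLocalRing.isUnit_or_isUnit_of_add_one (a := t) (b := 1 - t) (by ring) with hu | hu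
  · right
    exact hu.mul_left_cancel (by rw [h, mul_one])
  · left
    have : (1 - t) * t = (1 - t) * 0 := by
      have : t - t * t = 0 := by rw [h]; ring
      rw [mul_zero]; linear_combination this
    exact hu.mul_left_cancel this

lemma unit_comb {T : Type*} [CommRing T] {E : Matrix (Fin 2) (Fin 2) T} (hE : E * E = E)
    {x y : T} (hx : IsUnit x) (hy : IsUnit y) :
    IsUnit (x • E + y • (1 - E)) := by
  obtain ⟨u, rfl⟩ := hx; obtain ⟨v, rfl⟩ := hy
  have h1 : E * (1 - E) = 0 := by rw [mul_sub, mul_one, hE, sub_self]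
  have h2 : (1 - E) * E = 0 := by rw [sub_mul, one_mul, hE, sub_self]
  have h3 : (1 - E) * (1 - E) = 1 - E := by rw [sub_mul, one_mul, mul_sub, mul_one, hE]; abel
  refine ⟨⟨_, (↑u⁻¹ : T) • E + (↑v⁻¹ : T) • (1 - E), ?_, ?_⟩, rfl⟩ <;>
  · simp only [add_mul, mul_add, Matrix.smul_mul, Matrix.mul_smul, smul_smul, hE, h1, h2, h3,
      smul_zero, add_zero, zero_add, Units.mul_inv, Units.inv_mul, one_smul]
    abel

variable {R : Type*} [CommRing R] [IsLocalRing R]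

lemma diag_lemma0 (A e : Matrix (Fin 2) (Fin 2) R)
    (he : e * e = e) (hdet : e.det = 0) (hcomm : A * e = e * A) (hp : IsUnit (e 0 0))
    (ε : R) (hu : IsUnit (A - ε • e)) :
    ∃ a d : R, a + d = A.trace ∧ a * d = A.det ∧ IsUnit (a - ε) ∧ IsUnit d := by
  set u : Matrix (Fin 2) (Fin 2) R := !![e 0 0, -(e 0 1); e 1 0, e 0 0] with hu_def
  have h00 : e 0 0 * e 0 0 + e 0 1 * e 1 0 = e 0 0 := by
    have := congrFun (congrFun he 0) 0
    simpa [Matrix.mul_apply, Fin.sum_univ_two] using this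
  have h10 : e 1 0 * e 0 0 + e 1 1 * e 1 0 = e 1 0 := by
    have := congrFun (congrFun he 1) 0
    simpa [Matrix.mul_apply, Fin.sum_univ_two] using this
  have hdet2 : e 0 0 * e 1 1 - e 0 1 * e 1 0 = 0 := by
    simpa [Matrix.det_fin_two] using hdet
  have hdetu : u.det = e 0 0 := by
    simp [hu_def, Matrix.det_fin_two]
    linear_combination h00
  obtain ⟨U, hU⟩ := (Matrix.isUnit_iff_isUnit_det u).mpr (hdetu ▸ hp)
  set E11 : Matrix (Fin 2) (Fin 2) R := !![1, 0; 0, 0] with hE11_def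
  have heu : e * u = u * E11 := by
    have g00 : (e * u) 0 0 = (u * E11) 0 0 := by
      simp [hu_def, hE11_def, Matrix.mul_apply, Fin.sum_univ_two]; linear_combination h00
    have g01 : (e * u) 0 1 = (u * E11) 0 1 := by
      simp [hu_def, hE11_def, Matrix.mul_apply, Fin.sum_univ_two]; ring
    have g10 : (e * u) 1 0 = (u * E11) 1 0 := by
      simp [hu_def, hE11_def, Matrix.mul_apply, Fin.sum_univ_two]; linear_combination h10
    have g11 : (e * u) 1 1 = (u * E11) 1 1 := by
      simp [hu_def, hE11_def, Matrix.mul_apply, Fin.sum_univ_two]; linear_combination hdet2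
    ext i j
    fin_cases i <;> fin_cases j <;> first | exact g00 | exact g01 | exact g10 | exact g11
  set w : Matrix (Fin 2) (Fin 2) R := ↑U⁻¹ with hw_def
  have hwu : w * u = 1 := by rw [hw_def, ← hU]; exact U.inv_mul
  have huw : u * w = 1 := by rw [hw_def, ← hU]; exact U.mul_inv
  set B : Matrix (Fin 2) (Fin 2) R := w * A * u with hB_def
  have hwe : w * e = E11 * w := by
    calc w * e = w * e * (u * w) := by rw [huw, mul_one]
      _ = w * (e * u) * w := by noncomm_ring
      _ = w * (u * E11) * w := by rw [heu]
      _ = (w * u) * (E11 * w) := by noncomm_ring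
      _ = E11 * w := by rw [hwu, one_mul]
  have hBE : B * E11 = E11 * B := by
    calc B * E11 = w * A * (u * E11) := by rw [hB_def]; noncomm_ring
      _ = w * A * (e * u) := by rw [heu]
      _ = w * (A * e) * u := by noncomm_ring
      _ = w * (e * A) * u := by rw [hcomm]
      _ = (w * e) * A * u := by noncomm_ring
      _ = E11 * (w * A * u) := by rw [hwe]; noncomm_ring
      _ = E11 * B := by rw [hB_def]
  have hB01 : B 0 1 = 0 := by
    have := congrFun (congrFun hBE 0) 1
    simpa [hE11_def, Matrix.mul_apply, Fin.sum_univ_two] using this.symm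
  have hB10 : B 1 0 = 0 := by
    have := congrFun (congrFun hBE 1) 0
    simpa [hE11_def, Matrix.mul_apply, Fin.sum_univ_two] using this
  refine ⟨B 0 0, B 1 1, ?_, ?_, ?_, ?_⟩
  · -- trace
    have : B.trace = A.trace := by
      rw [hB_def, Matrix.trace_mul_cycle, huw, one_mul]
    rw [← this, Matrix.trace_fin_two]
  · -- det
    have hdB : B.det = A.det := by
      have : w.det * u.det = 1 := by rw [← Matrix.det_mul, hwu, Matrix.det_one]
      rw [hB_def, Matrix.det_mul, Matrix.det_mul]
      linear_combination A.det * this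
    rw [← hdB, Matrix.det_fin_two, hB01, hB10]; ring
  · -- IsUnit (B 0 0 - ε)
    have hBu : IsUnit (B - ε • E11) := by
      have : B - ε • E11 = w * (A - ε • e) * u := by
        rw [mul_sub, sub_mul, ← hB_def]
        congr 1
        symm
        calc (w * (ε • e)) * u = ε • (E11 * (w * u)) := by
              rw [Matrix.mul_smul, Matrix.smul_mul, hwe, mul_assoc]
          _ = ε • E11 := by rw [hwu, mul_one]
      rw [this]
      exact ((U⁻¹.isUnit).mul hu).mul (hU ▸ U.isUnit)
    have h' : IsUnit ((B 0 0 - ε) * (B 1 1)) := by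
      have hd : (B - ε • E11).det = (B 0 0 - ε) * (B 1 1) := by
        rw [Matrix.det_fin_two]
        simp [hE11_def, hB01, hB10]
      rw [← hd]; exact (Matrix.isUnit_iff_isUnit_det _).mp hBu
    exact isUnit_of_mul_isUnit_left h'
  · have hBu : IsUnit (B - ε • E11) := by
      have : B - ε • E11 = w * (A - ε • e) * u := by
        rw [mul_sub, sub_mul, ← hB_def]
        congr 1
        symm
        calc (w * (ε • e)) * u = ε • (E11 * (w * u)) := by
              rw [Matrix.mul_smul, Matrix.smul_mul, hwe, mul_assoc]
          _ = ε • E11 := by rw [hwu, mul_one]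
      rw [this]
      exact ((U⁻¹.isUnit).mul hu).mul (hU ▸ U.isUnit)
    have h' : IsUnit ((B 0 0 - ε) * (B 1 1)) := by
      have hd : (B - ε • E11).det = (B 0 0 - ε) * (B 1 1) := by
        rw [Matrix.det_fin_two]
        simp [hE11_def, hB01, hB10]
      rw [← hd]; exact (Matrix.isUnit_iff_isUnit_det _).mp hBu
    exact isUnit_of_mul_isUnit_right h'

lemma diag_lemma (A e : Matrix (Fin 2) (Fin 2) R)
    (he : e * e = e) (hdet : e.det = 0) (hcomm : A * e = e * A)
    (hp : IsUnit (e 0 0) ∨ IsUnit (e 1 1))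
    (ε : R) (hu : IsUnit (A - ε • e)) :
    ∃ a d : R, a + d = A.trace ∧ a * d = A.det ∧ IsUnit (a - ε) ∧ IsUnit d := by
  rcases hp with hp | hp
  · exact diag_lemma0 A e he hdet hcomm hp ε hu
  · set P : Matrix (Fin 2) (Fin 2) R := !![0, 1; 1, 0] with hP_def
    have hPP : P * P = 1 := by
      ext i j
      fin_cases i <;> fin_cases j <;>
        simp [hP_def, Matrix.mul_apply, Fin.sum_univ_two, Matrix.one_apply]
    have hPunit : IsUnit P := ⟨⟨P, P, hPP, hPP⟩, rfl⟩
    set A' := P * A * P with hA'_def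
    set e' := P * e * P with he'_def
    have he'00 : e' 0 0 = e 1 1 := by
      rw [he'_def]
      simp only [Matrix.mul_apply, Fin.sum_univ_two]
      simp [hP_def]
    have conj_mul : ∀ X Y : Matrix (Fin 2) (Fin 2) R,
        (P * X * P) * (P * Y * P) = P * (X * Y) * P := by
      intro X Y
      calc (P * X * P) * (P * Y * P) = P * X * (P * P) * Y * P := by noncomm_ring
        _ = P * X * 1 * Y * P := by rw [hPP]
        _ = P * (X * Y) * P := by noncomm_ring
    have hee' : e' * e' = e' := by
      rw [he'_def, conj_mul, he]
    have hdet' : e'.det = 0 := by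
      have hdP : P.det * P.det = 1 := by rw [← Matrix.det_mul, hPP, Matrix.det_one]
      rw [he'_def, Matrix.det_mul, Matrix.det_mul]
      linear_combination (P.det * P.det) * hdet
    have hcomm' : A' * e' = e' * A' := by
      rw [hA'_def, he'_def, conj_mul, conj_mul, hcomm]
    have hu' : IsUnit (A' - ε • e') := by
      have : A' - ε • e' = P * (A - ε • e) * P := by
        rw [hA'_def, he'_def, mul_sub, sub_mul, Matrix.mul_smul, Matrix.smul_mul]
      rw [this]
      exact (hPunit.mul hu).mul hPunit
    obtain ⟨a, d, h1, h2, h3, h4⟩ := diag_lemma0 A' e' hee' hdet' hcomm' (he'00 ▸ hp) ε hu'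
    refine ⟨a, d, ?_, ?_, h3, h4⟩
    · rw [h1, hA'_def, Matrix.trace_mul_cycle, hPP, one_mul]
    · rw [h2, hA'_def, Matrix.det_mul, Matrix.det_mul]
      have hdP : P.det * P.det = 1 := by rw [← Matrix.det_mul, hPP, Matrix.det_one]
      linear_combination A.det * hdP

lemma key (A : Matrix (Fin 2) (Fin 2) R) (h : IsVeryClean A) :
    IsUnit A ∨ IsUnit (A - 1) ∨ IsUnit (A + 1) ∨
    ∃ a d ε : R, (ε = 1 ∨ ε = -1) ∧ a + d = A.trace ∧ a * d = A.det ∧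
      IsUnit (a - d) ∧ IsUnit (a - ε) ∧ IsUnit d := by
  obtain ⟨e, he, hc, hu⟩ := h
  have he' : e * e = e := he
  obtain ⟨ε, hε, huε⟩ : ∃ ε : R, (ε = 1 ∨ ε = -1) ∧ IsUnit (A - ε • e) := by
    rcases hu with h | h
    · exact ⟨1, Or.inl rfl, by simpa using h⟩
    · exact ⟨-1, Or.inr rfl, by simpa [neg_smul, sub_neg_eq_add] using h⟩
  have hde : e.det * e.det = e.det := by rw [← Matrix.det_mul, he']
  rcases idem_local hde with hd0 | hd1
  · -- det e = 0
    have hch := ch2 e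
    have heq : e = e.trace • e := by
      have : e - e.trace • e = 0 := by
        rw [← hch, he', hd0, zero_smul, add_zero]
      linear_combination (norm := abel) this
    have htt : e.trace * e.trace = e.trace := by
      have := congrArg Matrix.trace heq
      rwa [Matrix.trace_smul, smul_eq_mul, eq_comm] at this
    rcases idem_local htt with ht0 | ht1
    · -- trace e = 0 so e = 0
      have he0 : e = 0 := by rw [heq, ht0, zero_smul]
      left
      rw [he0, smul_zero, sub_zero] at huε
      exact huε
    · -- trace e = 1
      have hsum : e 0 0 + e 1 1 = 1 := by rwa [Matrix.trace_fin_two] at ht1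
      have hp : IsUnit (e 0 0) ∨ IsUnit (e 1 1) :=
        IsLocalRing.isUnit_or_isUnit_of_add_one hsum
      obtain ⟨a, d, h1, h2, h3, h4⟩ := diag_lemma A e he' hd0 hc hp ε huε
      by_cases had : IsUnit (a - d)
      · exact Or.inr <| Or.inr <| Or.inr ⟨a, d, ε, hε, h1, h2, had, h3, h4⟩
      · -- a - d not a unit, then a is a unit, so A is a unit
        left
        have ha : IsUnit a := by
          have hd' : IsUnit (a + -(a - d)) := by
            have hh : a + -(a - d) = d := by ring
            rw [hh]; exact h4
          rcases IsLocalRing.isUnit_or_isUnit_of_isUnit_add hd' with h | h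
          · exact h
          · exact absurd (IsUnit.neg h) (by simpa using had)
        have : IsUnit A.det := by rw [← h2]; exact ha.mul h4
        exact (Matrix.isUnit_iff_isUnit_det A).mpr this
  · -- det e = 1 : e is a unit, hence e = 1
    have heu : IsUnit e := (Matrix.isUnit_iff_isUnit_det e).mpr (hd1 ▸ isUnit_one)
    have he1 : e = 1 := heu.mul_left_cancel (by rw [he', mul_one])
    rcases hε with rfl | rfl
    · right; left; rw [he1, one_smul] at huε; exact huε
    · right; right; left
      rw [he1, neg_smul, one_smul, sub_neg_eq_add] at huε
      exact huε

lemma hensel_quad {S R : Type*} [CommRing S] [CommRing R] (φ : S →+* R) (σ : R → S)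
    (hσ : ∀ r, φ (σ r) = r) (M : ℕ)
    (hnil : ∀ s, φ s = 0 → s ^ M = 0)
    (hunit : ∀ s : S, IsUnit (φ s) → IsUnit s)
    (τ δ : S) (a d : R) (hτ : φ τ = a + d) (hδ : φ δ = a * d)
    (had : IsUnit (a - d)) :
    ∃ lam : S, lam * lam - τ * lam + δ = 0 ∧ φ lam = a := by
  obtain ⟨n, hn_def⟩ : ∃ n : S, n = σ a * σ a - τ * σ a + δ := ⟨_, rfl⟩
  have hφp : ∀ lam : S, φ lam = a → φ (lam * lam - τ * lam + δ) = 0 := by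
    intro lam h
    simp only [_root_.map_sub, map_add, _root_.map_mul, h, hτ, hδ]
    ring
  have main : ∀ k : ℕ, ∃ lam c : S, φ lam = a ∧ lam * lam - τ * lam + δ = n ^ (2 ^ k) * c := by
    intro k
    induction k with
    | zero => exact ⟨σ a, 1, hσ a, by rw [pow_zero, pow_one, mul_one, hn_def]⟩
    | succ k ih =>
      obtain ⟨lam, c, hφlam, hc⟩ := ih
      have hder : IsUnit (2 * lam - τ) := by
        apply hunit
        simp only [_root_.map_sub, _root_.map_mul, map_ofNat, hφlam, hτ]
        convert had using 1
        push_cast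
        ring
      obtain ⟨u, hu⟩ := hder
      set v : S := (↑u⁻¹ : S) with hv_def
      have hv : (2 * lam - τ) * v = 1 := by rw [← hu, hv_def]; exact u.mul_inv
      set h : S := (lam * lam - τ * lam + δ) * v with hh_def
      refine ⟨lam - h, c * c * (v * v), ?_, ?_⟩
      · rw [_root_.map_sub, hφlam, hh_def, _root_.map_mul, hφp lam hφlam, zero_mul, sub_zero]
      · have step : (lam - h) * (lam - h) - τ * (lam - h) + δ = h * h := by
          rw [hh_def]
          linear_combination (-(lam * lam - τ * lam + δ)) * hv
        rw [step, hh_def, hc, pow_succ, pow_mul]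
        ring
  obtain ⟨lam, c, hφlam, hc⟩ := main M
  refine ⟨lam, ?_, hφlam⟩
  have hnM : n ^ M = 0 := hnil n (hn_def ▸ hφp (σ a) (hσ a))
  have hle : M ≤ 2 ^ M := Nat.le_of_lt (Nat.lt_two_pow_self (n := M))
  have : n ^ (2 ^ M) = 0 := by
    have : n ^ (2 ^ M) = n ^ M * n ^ (2 ^ M - M) := by
      rw [← pow_add]
      congr 1
      omega
    rw [this, hnM, zero_mul]
  rw [hc, this, zero_mul]

section lift
variable {S R : Type*} [CommRing S] [CommRing R] [IsLocalRing R]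

lemma lift_very_clean (φ : S →+* R) (σ : R → S) (hσ : ∀ r, φ (σ r) = r) (M : ℕ)
    (hnil : ∀ s, φ s = 0 → s ^ M = 0)
    (A : Matrix (Fin 2) (Fin 2) S) (h : IsVeryClean (A.map φ)) : IsVeryClean A := by
  have hunit : ∀ s : S, IsUnit (φ s) → IsUnit s := by
    intro s hs
    obtain ⟨u, hu⟩ := hs
    have h1 : φ (s * σ (↑u⁻¹ : R)) = 1 := by
      rw [_root_.map_mul, hσ, ← hu]; exact u.mul_inv
    have h2 : (1 - s * σ (↑u⁻¹ : R)) ^ M = 0 :=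
      hnil _ (by rw [_root_.map_sub, _root_.map_one, h1, sub_self])
    have h3 : IsUnit (s * σ (↑u⁻¹ : R)) := by
      have hnp : IsNilpotent (1 - s * σ (↑u⁻¹ : R)) := ⟨M, h2⟩
      simpa using hnp.isUnit_one_sub
    exact isUnit_of_mul_isUnit_left h3
  have hMunit : ∀ B : Matrix (Fin 2) (Fin 2) S, IsUnit (B.map φ) → IsUnit B := by
    intro B hB
    have hd : IsUnit (B.map φ).det := (Matrix.isUnit_iff_isUnit_det _).mp hB
    rw [show (B.map φ).det = φ B.det by rw [← RingHom.mapMatrix_apply, ← RingHom.map_det]] at hd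
    exact (Matrix.isUnit_iff_isUnit_det B).mpr (hunit _ hd)
  have hone : ((1 : Matrix (Fin 2) (Fin 2) S)).map φ = 1 := by
    rw [← RingHom.mapMatrix_apply, _root_.map_one]
  have hsub : ∀ B C : Matrix (Fin 2) (Fin 2) S, (B - C).map φ = B.map φ - C.map φ := by
    intro B C
    rw [← RingHom.mapMatrix_apply, _root_.map_sub, RingHom.mapMatrix_apply,
      RingHom.mapMatrix_apply]
  have htrace : φ A.trace = (A.map φ).trace := by
    simp [Matrix.trace, Matrix.map_apply, map_sum]
  have hdet : φ A.det = (A.map φ).det := by rw [RingHom.map_det, RingHom.mapMatrix_apply]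
  rcases key (A.map φ) h with h1 | h1 | h1 | ⟨a, d, ε, hε, ht, hd, had, hu1, hu2⟩
  · exact ⟨0, by simp [IsIdempotentElem], by simp,
      Or.inl (by rw [sub_zero]; exact hMunit A h1)⟩
  · refine ⟨1, IsIdempotentElem.one, by simp, Or.inl ?_⟩
    apply hMunit
    rw [hsub, hone]
    exact h1
  · refine ⟨1, IsIdempotentElem.one, by simp, Or.inr ?_⟩
    apply hMunit
    have : (A + 1).map φ = A.map φ + 1 := by
      rw [← RingHom.mapMatrix_apply, _root_.map_add, _root_.map_one, RingHom.mapMatrix_apply]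
    rw [this]
    exact h1
  · -- Hensel lifting case
    obtain ⟨lam, hlam, hφlam⟩ := hensel_quad φ σ hσ M hnil hunit A.trace A.det a d
      (by rw [htrace, ht]) (by rw [hdet, hd]) had
    set μ : S := A.trace - lam with hμ_def
    have hφμ : φ μ = d := by
      rw [hμ_def, _root_.map_sub, htrace, ← ht, hφlam]; ring
    have hlamμ : lam * μ = A.det := by
      rw [hμ_def]; linear_combination -hlam
    have hsumlm : lam + μ = A.trace := by rw [hμ_def]; ring
    obtain ⟨u, hu⟩ := hunit (lam - μ) (by
      rw [_root_.map_sub, hφlam, hφμ]; exact had)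
    set v : S := (↑u⁻¹ : S) with hv_def
    have hv : v * (lam - μ) = 1 := by rw [hv_def, ← hu]; exact u.inv_mul
    set E : Matrix (Fin 2) (Fin 2) S := v • (A - μ • 1) with hE_def
    have hAE : (lam - μ) • E = A - μ • (1 : Matrix (Fin 2) (Fin 2) S) := by
      rw [hE_def, smul_smul, mul_comm (lam - μ) v, hv, one_smul]
    have hch := ch2 A
    have hfact : (A - μ • 1) * (A - lam • (1 : Matrix (Fin 2) (Fin 2) S)) = 0 := by
      have expand : (A - μ • 1) * (A - lam • (1 : Matrix (Fin 2) (Fin 2) S)) =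
          A * A - A.trace • A + A.det • 1 := by
        have e1 : A * (lam • (1 : Matrix (Fin 2) (Fin 2) S)) = lam • A := by
          rw [Matrix.mul_smul, mul_one]
        have e2 : (μ • (1 : Matrix (Fin 2) (Fin 2) S)) * A = μ • A := by
          rw [Matrix.smul_mul, one_mul]
        have e3 : (μ • (1 : Matrix (Fin 2) (Fin 2) S)) * (lam • (1 : Matrix (Fin 2) (Fin 2) S))
            = (μ * lam) • (1 : Matrix (Fin 2) (Fin 2) S) := by
          rw [Matrix.smul_mul, Matrix.mul_smul, one_mul, smul_smul]
        rw [sub_mul, mul_sub, mul_sub, e1, e2, e3, mul_comm μ lam, hlamμ, ← hsumlm, add_smul]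
        abel
      rw [expand, hch]
    have hsq : (A - μ • 1) * (A - μ • (1 : Matrix (Fin 2) (Fin 2) S)) =
        (lam - μ) • (A - μ • (1 : Matrix (Fin 2) (Fin 2) S)) := by
      have hsum2 : (A - lam • (1 : Matrix (Fin 2) (Fin 2) S)) +
          (lam - μ) • (1 : Matrix (Fin 2) (Fin 2) S) = A - μ • 1 := by
        rw [sub_smul]; abel
      calc (A - μ • 1) * (A - μ • (1 : Matrix (Fin 2) (Fin 2) S))
          = (A - μ • 1) * ((A - lam • 1) + (lam - μ) • 1) := by rw [hsum2]
        _ = (A - μ • 1) * (A - lam • 1) + (lam - μ) • ((A - μ • 1) * 1) := by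
            rw [mul_add, Matrix.mul_smul]
        _ = (lam - μ) • (A - μ • 1) := by rw [hfact, zero_add, mul_one]
    have hEE : E * E = E := by
      rw [hE_def, Matrix.smul_mul, Matrix.mul_smul, smul_smul, hsq, smul_smul]
      rw [show v * v * (lam - μ) = v * (v * (lam - μ)) by ring, hv, mul_one]
    have hcommA : A * E = E * A := by
      rw [hE_def, Matrix.mul_smul, Matrix.smul_mul]
      congr 1
      rw [mul_sub, sub_mul, Matrix.mul_smul, Matrix.smul_mul, mul_one, one_mul]
    have hAdecomp : A = (lam - μ) • E + μ • (1 : Matrix (Fin 2) (Fin 2) S) := by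
      rw [hAE]; abel
    have main : ∀ εS : S, φ εS = ε → IsUnit (A - εS • E) := by
      intro εS hφε
      have hform : A - εS • E = (lam - εS) • E + μ • ((1 : Matrix (Fin 2) (Fin 2) S) - E) := by
        rw [hAdecomp, smul_sub, sub_smul lam μ, sub_smul lam εS]
        abel
      rw [hform]
      exact unit_comb hEE
        (hunit _ (by rw [_root_.map_sub, hφlam, hφε]; exact hu1))
        (hunit _ (by rw [hφμ]; exact hu2))
    refine ⟨E, hEE, hcommA, ?_⟩
    rcases hε with rfl | rfl
    · left
      have := main 1 (_root_.map_one φ)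
      rwa [one_smul] at this
    · right
      have := main (-1) (by rw [_root_.map_neg, _root_.map_one])
      rwa [neg_smul, one_smul, sub_neg_eq_add] at this

end lift


end Aux

theorem M2_powerSeries_quot_very_clean_iff (R : Type*) [CommRing R] [IsLocalRing R]
    (m : ℕ) (hm : 1 ≤ m)
    (A : Matrix (Fin 2) (Fin 2)
      (PowerSeries R ⧸ Ideal.span {(PowerSeries.X : PowerSeries R) ^ m})) :
    IsVeryClean A ↔ IsVeryClean (A.map (constantCoeffQuot R m hm)) := by
  set φ := constantCoeffQuot R m hm with hφ_def
  constructor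
  · rintro ⟨E, hE, hc, hu⟩
    refine ⟨E.map φ, ?_, ?_, ?_⟩
    · show E.map φ * E.map φ = E.map φ
      show φ.mapMatrix E * φ.mapMatrix E = φ.mapMatrix E
      rw [← _root_.map_mul, hE]
    · show φ.mapMatrix A * φ.mapMatrix E = φ.mapMatrix E * φ.mapMatrix A
      rw [← _root_.map_mul, ← _root_.map_mul, hc]
    · rcases hu with h | h
      · left
        have := h.map φ.mapMatrix
        rwa [_root_.map_sub, RingHom.mapMatrix_apply, RingHom.mapMatrix_apply] at this
      · right
        have := h.map φ.mapMatrix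
        rwa [_root_.map_add, RingHom.mapMatrix_apply, RingHom.mapMatrix_apply] at this
  · intro h
    have hσ : ∀ r : R, φ (Ideal.Quotient.mk _ (PowerSeries.C r)) = r := by
      intro r
      rw [hφ_def]
      erw [Ideal.Quotient.lift_mk]
      simp
    have hnil : ∀ s, φ s = 0 → s ^ m = 0 := by
      intro s hs
      obtain ⟨f, rfl⟩ := Ideal.Quotient.mk_surjective s
      have hf : PowerSeries.constantCoeff f = 0 := by
        rw [hφ_def] at hs
        erw [Ideal.Quotient.lift_mk] at hs
        exact hs
      obtain ⟨g, hg⟩ := PowerSeries.X_dvd_iff.mpr hf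
      rw [← map_pow, Ideal.Quotient.eq_zero_iff_mem, hg, mul_pow, Ideal.mem_span_singleton]
      exact Dvd.intro _ rfl
    exact lift_very_clean φ (fun r => Ideal.Quotient.mk _ (PowerSeries.C r)) hσ m hnil A h
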